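/- Let R_ma(t) denote the number of reduced 3×3 magic squares whose magic sum equals t. Then for every integer t ≥ 1: R_ma(t) = 0 if t is not divisible by 3; 3·R_ma(t) = 4(t−12) if t ≡ 0 (mod 18); 3·R_ma(t) = 4(t−3) if t ≡ 3 or 15 (mod 18); 3·R_ma(t) = 4(t−6) if t ≡ 6 or 12 (mod 18); and 3·R_ma(t) = 4(t−9) if t ≡ 9 (mod 18). -/

import Mathlib

/-- A 3×3 magic square with magic sum `s`: all nine entries distinct, all row
sums, column sums, the main diagonal sum and the antidiagonal sum equal `s`. -/
def IsMagicSqSum (x : Matrix (Fin 3) (Fin 3) ℤ) (s : ℤ) : Prop :=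
  (Function.Injective fun p : Fin 3 × Fin 3 => x p.1 p.2) ∧
  (∀ i, ∑ j, x i j = s) ∧ (∀ j, ∑ i, x i j = s) ∧
  x 0 0 + x 1 1 + x 2 2 = s ∧ x 0 2 + x 1 1 + x 2 0 = s

/-- `Rma t` = number of reduced 3×3 magic squares (nonnegative entries, minimum
entry 0) whose magic sum equals t. -/
noncomputable def Rma (t : ℕ) : ℕ :=
  {x : Matrix (Fin 3) (Fin 3) ℤ |
    IsMagicSqSum x (t : ℤ) ∧ (∀ i j, 0 ≤ x i j) ∧ (∃ i j, x i j = 0)}.ncard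

def mkSq (c : ℤ) (p : ℤ × ℤ) : Matrix (Fin 3) (Fin 3) ℤ := fun i j =>
  match i, j with
  | ⟨0,_⟩, ⟨0,_⟩ => c - p.1
  | ⟨0,_⟩, ⟨1,_⟩ => c + p.1 + p.2
  | ⟨0,_⟩, ⟨2,_⟩ => c - p.2
  | ⟨1,_⟩, ⟨0,_⟩ => c + p.1 - p.2
  | ⟨1,_⟩, ⟨1,_⟩ => c
  | ⟨1,_⟩, ⟨2,_⟩ => c - p.1 + p.2
  | ⟨2,_⟩, ⟨0,_⟩ => c + p.2
  | ⟨2,_⟩, ⟨1,_⟩ => c - p.1 - p.2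
  | ⟨2,_⟩, ⟨2,_⟩ => c + p.1

def MCondP (c : ℤ) (p : ℤ × ℤ) : Prop :=
  p.1.natAbs + p.2.natAbs = c.natAbs ∧ p.1 ≠ 0 ∧ p.2 ≠ 0 ∧ p.1 ≠ p.2 ∧ p.1 ≠ -p.2 ∧
  2*p.1 ≠ p.2 ∧ 2*p.1 ≠ -p.2 ∧ p.1 ≠ 2*p.2 ∧ p.1 ≠ -2*p.2

instance (c : ℤ) : DecidablePred (MCondP c) := fun p => by unfold MCondP; infer_instance

lemma cond_of_inj (c a b : ℤ)
    (hinj : Function.Injective fun q : Fin 3 × Fin 3 => mkSq c (a,b) q.1 q.2) :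
    a ≠ 0 ∧ b ≠ 0 ∧ a ≠ b ∧ a ≠ -b ∧ 2*a ≠ b ∧ 2*a ≠ -b ∧ a ≠ 2*b ∧ a ≠ -2*b := by
  refine ⟨fun h => ?_, fun h => ?_, fun h => ?_, fun h => ?_, fun h => ?_, fun h => ?_,
    fun h => ?_, fun h => ?_⟩
  · exact absurd (hinj (a₁ := (0,0)) (a₂ := (1,1)) (show c - a = c by omega)) (by decide)
  · exact absurd (hinj (a₁ := (0,2)) (a₂ := (1,1)) (show c - b = c by omega)) (by decide)
  · exact absurd (hinj (a₁ := (0,0)) (a₂ := (0,2)) (show c - a = c - b by omega)) (by decide)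
  · exact absurd (hinj (a₁ := (0,0)) (a₂ := (2,0)) (show c - a = c + b by omega)) (by decide)
  · exact absurd (hinj (a₁ := (1,0)) (a₂ := (0,0)) (show c + a - b = c - a by omega)) (by decide)
  · exact absurd (hinj (a₁ := (0,1)) (a₂ := (0,0)) (show c + a + b = c - a by omega)) (by decide)
  · exact absurd (hinj (a₁ := (1,2)) (a₂ := (0,2)) (show c - a + b = c - b by omega)) (by decide)
  · exact absurd (hinj (a₁ := (2,1)) (a₂ := (2,0)) (show c - a - b = c + b by omega)) (by decide)

set_option maxHeartbeats 1000000 in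
lemma inj_of_cond (c a b : ℤ)
    (h : a ≠ 0 ∧ b ≠ 0 ∧ a ≠ b ∧ a ≠ -b ∧ 2*a ≠ b ∧ 2*a ≠ -b ∧ a ≠ 2*b ∧ a ≠ -2*b) :
    Function.Injective fun q : Fin 3 × Fin 3 => mkSq c (a,b) q.1 q.2 := by
  obtain ⟨h1,h2,h3,h4,h5,h6,h7,h8⟩ := h
  intro p q hpq
  obtain ⟨⟨i,hi⟩,⟨j,hj⟩⟩ := p; obtain ⟨⟨k,hk⟩,⟨l,hl⟩⟩ := q
  simp only [Prod.mk.injEq, Fin.mk.injEq]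
  interval_cases i <;> interval_cases j <;> interval_cases k <;> interval_cases l <;>
    simp_all [mkSq] <;> omega

lemma red_of_cond (c a b : ℤ) (hc : 1 ≤ c) (habs : a.natAbs + b.natAbs = c.natAbs) :
    (∀ i j, 0 ≤ mkSq c (a,b) i j) ∧ (∃ i j, mkSq c (a,b) i j = 0) := by
  constructor
  · intro i j
    fin_cases i <;> fin_cases j <;> simp only [mkSq] <;> omega
  · rcases le_or_gt 0 a with ha | ha <;> rcases le_or_gt 0 b with hb | hb
    · exact ⟨2, 1, show c - a - b = 0 by omega⟩
    · exact ⟨1, 2, show c - a + b = 0 by omega⟩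
    · exact ⟨1, 0, show c + a - b = 0 by omega⟩
    · exact ⟨0, 1, show c + a + b = 0 by omega⟩

lemma abs_of_red (c a b : ℤ) (hp : ∀ i j, 0 ≤ mkSq c (a,b) i j)
    (hz : ∃ i j, mkSq c (a,b) i j = 0) : a.natAbs + b.natAbs = c.natAbs := by
  have p1 : (0:ℤ) ≤ c - a := hp 0 0
  have p2 : (0:ℤ) ≤ c + a + b := hp 0 1
  have p3 : (0:ℤ) ≤ c - b := hp 0 2
  have p4 : (0:ℤ) ≤ c + a - b := hp 1 0
  have p6 : (0:ℤ) ≤ c - a + b := hp 1 2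
  have p7 : (0:ℤ) ≤ c + b := hp 2 0
  have p8 : (0:ℤ) ≤ c - a - b := hp 2 1
  have p9 : (0:ℤ) ≤ c + a := hp 2 2
  obtain ⟨i, j, hz⟩ := hz
  fin_cases i <;> fin_cases j <;> simp only [mkSq] at hz <;> omega

lemma magic_mkSq (c a b : ℤ) (hcond : a ≠ 0 ∧ b ≠ 0 ∧ a ≠ b ∧ a ≠ -b ∧ 2*a ≠ b ∧ 2*a ≠ -b ∧
    a ≠ 2*b ∧ a ≠ -2*b) : IsMagicSqSum (mkSq c (a,b)) (3*c) := by
  refine ⟨inj_of_cond c a b hcond, ?_, ?_, ?_, ?_⟩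
  · intro i
    fin_cases i <;> rw [Fin.sum_univ_three]
    · show (c - a) + (c + a + b) + (c - b) = 3*c; ring
    · show (c + a - b) + c + (c - a + b) = 3*c; ring
    · show (c + b) + (c - a - b) + (c + a) = 3*c; ring
  · intro j
    fin_cases j <;> rw [Fin.sum_univ_three]
    · show (c - a) + (c + a - b) + (c + b) = 3*c; ring
    · show (c + a + b) + c + (c - a - b) = 3*c; ring
    · show (c - b) + (c - a + b) + (c + a) = 3*c; ring
  · show (c - a) + c + (c + a) = 3*c; ring
  · show (c - b) + c + (c + b) = 3*c; ring
lemma setEq (c : ℤ) (hc : 1 ≤ c) :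
    {x : Matrix (Fin 3) (Fin 3) ℤ |
      IsMagicSqSum x (3*c) ∧ (∀ i j, 0 ≤ x i j) ∧ (∃ i j, x i j = 0)}
      = mkSq c '' {p : ℤ × ℤ | MCondP c p} := by
  ext x
  simp only [Set.mem_setOf_eq, Set.mem_image]
  constructor
  · rintro ⟨⟨hinj, hrow, hcol, hd, had⟩, hpos, hzero⟩
    have r0 := hrow 0; have r1 := hrow 1; have r2 := hrow 2
    have c0 := hcol 0; have c1 := hcol 1; have c2 := hcol 2
    rw [Fin.sum_univ_three] at r0 r1 r2 c0 c1 c2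
    obtain ⟨a, ha⟩ : ∃ a : ℤ, a = c - x 0 0 := ⟨_, rfl⟩
    obtain ⟨b, hb⟩ : ∃ b : ℤ, b = c - x 0 2 := ⟨_, rfl⟩
    have hx : x = mkSq c (a, b) := by
      ext i j
      fin_cases i <;> fin_cases j
      · show x 0 0 = c - a; omega
      · show x 0 1 = c + a + b; omega
      · show x 0 2 = c - b; omega
      · show x 1 0 = c + a - b; omega
      · show x 1 1 = c; omega
      · show x 1 2 = c - a + b; omega
      · show x 2 0 = c + b; omega
      · show x 2 1 = c - a - b; omega
      · show x 2 2 = c + a; omega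
    rw [hx] at hinj hpos hzero
    obtain ⟨q1,q2,q3,q4,q5,q6,q7,q8⟩ := cond_of_inj c a b hinj
    exact ⟨(a,b), ⟨abs_of_red c a b hpos hzero, q1,q2,q3,q4,q5,q6,q7,q8⟩, hx.symm⟩
  · rintro ⟨⟨a,b⟩, ⟨habs, hcond⟩, rfl⟩
    obtain ⟨h1, h2⟩ := red_of_cond c a b hc habs
    exact ⟨magic_mkSq c a b hcond, h1, h2⟩
noncomputable def qF (c : ℤ) : Finset ℤ :=
  (Finset.Icc 1 c).filter (fun a => a ≠ c ∧ 2*a ≠ c ∧ 3*a ≠ c ∧ 3*a ≠ 2*c)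

noncomputable def pairF (c : ℤ) : Finset (ℤ × ℤ) :=
  ((Finset.Icc (-c) c) ×ˢ (Finset.Icc (-c) c)).filter (MCondP c)

lemma coe_pairF (c : ℤ) (hc : 1 ≤ c) : {p : ℤ × ℤ | MCondP c p} = ↑(pairF c) := by
  ext ⟨x, y⟩
  simp only [Set.mem_setOf_eq, pairF, Finset.coe_filter, Finset.mem_product, Finset.mem_Icc,
    MCondP]
  omega

lemma pair_decomp (c : ℤ) (hc : 1 ≤ c) :
    pairF c = (((qF c).image fun a => (a, c-a)) ∪ ((qF c).image fun a => (-(c-a), a))) ∪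
      (((qF c).image fun a => (-a, -(c-a))) ∪ ((qF c).image fun a => (c-a, -a))) := by
  ext ⟨x, y⟩
  simp only [pairF, qF, MCondP, Finset.mem_filter, Finset.mem_product, Finset.mem_Icc,
    Finset.mem_union, Finset.mem_image, Prod.mk.injEq]
  constructor
  · rintro ⟨⟨⟨hx1, hx2⟩, hy1, hy2⟩, habs, hx0, hy0, h5, h6, h7, h8, h9, h10⟩
    rcases le_or_gt 1 x with hx | hx <;> rcases le_or_gt 1 y with hy | hy
    · exact Or.inl (Or.inl ⟨x, by omega, rfl, by omega⟩)
    · exact Or.inr (Or.inr ⟨-y, by omega, by omega, by omega⟩)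
    · exact Or.inl (Or.inr ⟨y, by omega, by omega, rfl⟩)
    · exact Or.inr (Or.inl ⟨-x, by omega, by omega, by omega⟩)
  · rintro ((⟨a, ha, rfl, rfl⟩ | ⟨a, ha, rfl, rfl⟩) | (⟨a, ha, rfl, rfl⟩ | ⟨a, ha, rfl, rfl⟩)) <;>
      refine ⟨by omega, by omega, by omega, by omega, by omega, by omega, by omega, by omega,
        by omega, by omega⟩
lemma pairF_card (c : ℤ) (hc : 1 ≤ c) : (pairF c).card = 4 * (qF c).card := by
  have hq : ∀ a ∈ qF c, 1 ≤ a ∧ a ≤ c ∧ a ≠ c := by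
    intro a ha
    simp only [qF, Finset.mem_filter, Finset.mem_Icc] at ha
    omega
  have d12 : Disjoint ((qF c).image fun a => (a, c-a)) ((qF c).image fun a => (-(c-a), a)) := by
    rw [Finset.disjoint_left]
    rintro ⟨x, y⟩ h1 h2
    simp only [Finset.mem_image, Prod.mk.injEq] at h1 h2
    obtain ⟨a, ha, rfl, rfl⟩ := h1; obtain ⟨a', ha', he, _⟩ := h2
    have := hq a ha; have := hq a' ha'; omega
  have d34 : Disjoint ((qF c).image fun a => (-a, -(c-a))) ((qF c).image fun a => (c-a, -a)) := by
    rw [Finset.disjoint_left]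
    rintro ⟨x, y⟩ h1 h2
    simp only [Finset.mem_image, Prod.mk.injEq] at h1 h2
    obtain ⟨a, ha, rfl, rfl⟩ := h1; obtain ⟨a', ha', he, _⟩ := h2
    have := hq a ha; have := hq a' ha'; omega
  have dbig : Disjoint (((qF c).image fun a => (a, c-a)) ∪ ((qF c).image fun a => (-(c-a), a)))
      (((qF c).image fun a => (-a, -(c-a))) ∪ ((qF c).image fun a => (c-a, -a))) := by
    rw [Finset.disjoint_left]
    rintro ⟨x, y⟩ h1 h2
    simp only [Finset.mem_union, Finset.mem_image, Prod.mk.injEq] at h1 h2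
    rcases h1 with ⟨a, ha, rfl, rfl⟩ | ⟨a, ha, he1, he2⟩ <;>
      rcases h2 with ⟨a', ha', he1', he2'⟩ | ⟨a', ha', he1', he2'⟩ <;>
      [skip; skip; skip; skip] <;>
      · have := hq a ha; have := hq a' ha'; omega
  have i1 : ((qF c).image fun a => (a, c-a)).card = (qF c).card :=
    Finset.card_image_of_injective _ (fun a b h => by simpa using congrArg Prod.fst h)
  have i2 : ((qF c).image fun a => (-(c-a), a)).card = (qF c).card :=
    Finset.card_image_of_injective _ (fun a b h => by simpa using congrArg Prod.snd h)
  have i3 : ((qF c).image fun a => (-a, -(c-a))).card = (qF c).card :=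
    Finset.card_image_of_injective _ (fun a b h => by
      have := congrArg Prod.fst h; simp at this; omega)
  have i4 : ((qF c).image fun a => (c-a, -a)).card = (qF c).card :=
    Finset.card_image_of_injective _ (fun a b h => by
      have := congrArg Prod.snd h; simp at this; omega)
  rw [pair_decomp c hc, Finset.card_union_of_disjoint dbig, Finset.card_union_of_disjoint d12,
    Finset.card_union_of_disjoint d34, i1, i2, i3, i4]
  ring

lemma qF_card (c : ℤ) (hc : 1 ≤ c) :
    ((qF c).card : ℤ) = c - 1 - (if 2 ∣ c then 1 else 0) - (if 3 ∣ c then 2 else 0) := by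
  have key := Finset.card_filter_add_card_filter_not
    (s := Finset.Icc 1 c) (p := fun a => a ≠ c ∧ 2*a ≠ c ∧ 3*a ≠ c ∧ 3*a ≠ 2*c)
  beta_reduce at key
  have hIcc : (Finset.Icc 1 c).card = c.toNat := by
    rw [Int.card_Icc]; omega
  by_cases h2 : 2 ∣ c <;> by_cases h3 : 3 ∣ c
  · obtain ⟨d, rfl⟩ : 6 ∣ c := by omega
    have hN : (Finset.Icc 1 (6*d)).filter
        (fun a => ¬(a ≠ 6*d ∧ 2*a ≠ 6*d ∧ 3*a ≠ 6*d ∧ 3*a ≠ 2*(6*d))) = {6*d, 3*d, 2*d, 4*d} := by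
      ext a
      simp only [Finset.mem_filter, Finset.mem_Icc, Finset.mem_insert, Finset.mem_singleton]
      omega
    rw [hN] at key
    have hd : 1 ≤ d := by omega
    have hc4 : ({6*d, 3*d, 2*d, 4*d} : Finset ℤ).card = 4 := by
      rw [Finset.card_insert_of_notMem (by simp; omega),
        Finset.card_insert_of_notMem (by simp; omega),
        Finset.card_insert_of_notMem (by simp; omega), Finset.card_singleton]
    rw [hc4, hIcc] at key
    simp only [qF]
    rw [if_pos h2, if_pos h3]
    omega
  · obtain ⟨d, rfl⟩ := h2
    have hN : (Finset.Icc 1 (2*d)).filter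
        (fun a => ¬(a ≠ 2*d ∧ 2*a ≠ 2*d ∧ 3*a ≠ 2*d ∧ 3*a ≠ 2*(2*d))) = {2*d, d} := by
      ext a
      simp only [Finset.mem_filter, Finset.mem_Icc, Finset.mem_insert, Finset.mem_singleton]
      constructor
      · rintro ⟨h, hh⟩; omega
      · intro h; omega
    rw [hN] at key
    have hc2 : ({2*d, d} : Finset ℤ).card = 2 := by
      rw [Finset.card_insert_of_notMem (by simp; omega), Finset.card_singleton]
    rw [hc2, hIcc] at key
    simp only [qF]
    rw [if_pos ⟨d, rfl⟩, if_neg h3]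
    omega
  · obtain ⟨d, rfl⟩ := h3
    have hN : (Finset.Icc 1 (3*d)).filter
        (fun a => ¬(a ≠ 3*d ∧ 2*a ≠ 3*d ∧ 3*a ≠ 3*d ∧ 3*a ≠ 2*(3*d))) = {3*d, d, 2*d} := by
      ext a
      simp only [Finset.mem_filter, Finset.mem_Icc, Finset.mem_insert, Finset.mem_singleton]
      constructor
      · rintro ⟨h, hh⟩; omega
      · intro h; omega
    rw [hN] at key
    have hc3 : ({3*d, d, 2*d} : Finset ℤ).card = 3 := by
      rw [Finset.card_insert_of_notMem (by simp; omega),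
        Finset.card_insert_of_notMem (by simp; omega), Finset.card_singleton]
    rw [hc3, hIcc] at key
    simp only [qF]
    rw [if_neg h2, if_pos ⟨d, rfl⟩]
    omega
  · have hN : (Finset.Icc 1 c).filter
        (fun a => ¬(a ≠ c ∧ 2*a ≠ c ∧ 3*a ≠ c ∧ 3*a ≠ 2*c)) = {c} := by
      ext a
      simp only [Finset.mem_filter, Finset.mem_Icc, Finset.mem_singleton]
      constructor
      · rintro ⟨h, hh⟩; omega
      · intro h; omega
    rw [hN, Finset.card_singleton, hIcc] at key
    simp only [qF]
    rw [if_neg h2, if_neg h3]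
    omega
lemma mkSq_injective (c : ℤ) : Function.Injective (mkSq c) := by
  intro p q h
  have h1 : c + p.1 = c + q.1 := congrFun (congrFun h 2) 2
  have h2 : c + p.2 = c + q.2 := congrFun (congrFun h 2) 0
  exact Prod.ext (by omega) (by omega)

lemma Rma_count (m : ℕ) (hm : 1 ≤ m) :
    (Rma (3*m) : ℤ) =
      4 * ((m:ℤ) - 1 - (if 2 ∣ (m:ℤ) then 1 else 0) - (if 3 ∣ (m:ℤ) then 2 else 0)) := by
  have hc : 1 ≤ (m:ℤ) := by exact_mod_cast hm
  have key : Rma (3*m) = (pairF (m:ℤ)).card := by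
    unfold Rma
    rw [show (((3*m : ℕ)):ℤ) = 3*(m:ℤ) by push_cast; ring]
    rw [setEq (m:ℤ) hc, coe_pairF (m:ℤ) hc,
      Set.ncard_image_of_injective _ (mkSq_injective (m:ℤ)), Set.ncard_coe_finset]
  rw [key, pairF_card (m:ℤ) hc]
  push_cast
  rw [qF_card (m:ℤ) hc]

theorem reduced_magic_affine_count (t : ℕ) (ht : 1 ≤ t) :
    (¬ (3 ∣ t) → Rma t = 0) ∧
    (t % 18 = 0 → 3 * (Rma t : ℤ) = 4 * ((t : ℤ) - 12)) ∧
    ((t % 18 = 3 ∨ t % 18 = 15) → 3 * (Rma t : ℤ) = 4 * ((t : ℤ) - 3)) ∧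
    ((t % 18 = 6 ∨ t % 18 = 12) → 3 * (Rma t : ℤ) = 4 * ((t : ℤ) - 6)) ∧
    (t % 18 = 9 → 3 * (Rma t : ℤ) = 4 * ((t : ℤ) - 9)) := by
  refine ⟨?_, ?_, ?_, ?_, ?_⟩
  · intro h
    have hemp : {x : Matrix (Fin 3) (Fin 3) ℤ |
        IsMagicSqSum x (t : ℤ) ∧ (∀ i j, 0 ≤ x i j) ∧ (∃ i j, x i j = 0)} = ∅ := by
      ext x
      simp only [Set.mem_setOf_eq, Set.mem_empty_iff_false, iff_false, not_and]
      rintro ⟨hinj, hrow, hcol, hd, had⟩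
      intro _ _
      have r0 := hrow 0; have r1 := hrow 1; have r2 := hrow 2
      have c1 := hcol 1
      rw [Fin.sum_univ_three] at r0 r1 r2 c1
      have h3 : 3 * x 1 1 = (t:ℤ) := by omega
      exact h (by omega)
    unfold Rma
    rw [hemp, Set.ncard_empty]
  · intro hmod
    have h3 : 3 ∣ t := by omega
    obtain ⟨m, rfl⟩ := h3
    have hm : 1 ≤ m := by omega
    rw [Rma_count m hm, if_pos (show (2:ℤ) ∣ (m:ℤ) by omega),
      if_pos (show (3:ℤ) ∣ (m:ℤ) by omega)]
    push_cast
    omega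
  · intro hmod
    have h3 : 3 ∣ t := by omega
    obtain ⟨m, rfl⟩ := h3
    have hm : 1 ≤ m := by omega
    rw [Rma_count m hm, if_neg (show ¬ ((2:ℤ) ∣ (m:ℤ)) by omega),
      if_neg (show ¬ ((3:ℤ) ∣ (m:ℤ)) by omega)]
    push_cast
    omega
  · intro hmod
    have h3 : 3 ∣ t := by omega
    obtain ⟨m, rfl⟩ := h3
    have hm : 1 ≤ m := by omega
    rw [Rma_count m hm, if_pos (show (2:ℤ) ∣ (m:ℤ) by omega),
      if_neg (show ¬ ((3:ℤ) ∣ (m:ℤ)) by omega)]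
    push_cast
    omega
  · intro hmod
    have h3 : 3 ∣ t := by omega
    obtain ⟨m, rfl⟩ := h3
    have hm : 1 ≤ m := by omega
    rw [Rma_count m hm, if_neg (show ¬ ((2:ℤ) ∣ (m:ℤ)) by omega),
      if_pos (show (3:ℤ) ∣ (m:ℤ) by omega)]
    push_cast
    omega
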